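/- Let p be a stochastic kernel on ℝ^d such that p(x,·) is absolutely continuous with respect to Lebesgue measure for every x ∈ ℝ^d. Then p admits a jointly measurable density: there exists a Borel-measurable f : ℝ^d × ℝ^d → [0,∞) such that p(x,A) = ∫_A f(x,y) dy for every x and every Borel set A. -/

import Mathlib

open MeasureTheory
open scoped ENNReal

/-- Let `p` be a stochastic kernel on `ℝ^d` such that `p(x,·) ≪ Leb` for
every `x`. Then `p` admits a jointly measurable density: there is a Borel-measurable
`f : ℝ^d × ℝ^d → [0,∞)` with `p(x, A) = ∫_A f(x,y) dy` for every `x` and Borel `A`. -/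
theorem stmt11 {d : ℕ}
    (p : EuclideanSpace ℝ (Fin d) → Measure (EuclideanSpace ℝ (Fin d)))
    (hp : ∀ x, IsProbabilityMeasure (p x)) (hpmeas : Measurable p)
    (hac : ∀ x, p x ≪ volume) :
    ∃ f : EuclideanSpace ℝ (Fin d) → EuclideanSpace ℝ (Fin d) → ℝ,
      Measurable (Function.uncurry f) ∧ (∀ x y, 0 ≤ f x y) ∧
      ∀ x, ∀ A : Set (EuclideanSpace ℝ (Fin d)), MeasurableSet A →
        p x A = ∫⁻ y in A, ENNReal.ofReal (f x y) := by
  set E := EuclideanSpace ℝ (Fin d)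
  obtain ⟨ν, hνfin, hvν, hνv⟩ :=
    exists_isFiniteMeasure_absolutelyContinuous (volume : Measure E)
  set κ : ProbabilityTheory.Kernel E E := ⟨p, hpmeas⟩ with hκ
  have : ProbabilityTheory.IsMarkovKernel κ := ⟨fun x => hp x⟩
  set η : ProbabilityTheory.Kernel E E := ProbabilityTheory.Kernel.const E ν with hη
  set g : E → ℝ≥0∞ := ν.rnDeriv volume with hg
  have hgmeas : Measurable g := Measure.measurable_rnDeriv ν volume
  have hf0 : Measurable (Function.uncurry (ProbabilityTheory.Kernel.rnDeriv κ η)) :=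
    ProbabilityTheory.Kernel.measurable_rnDeriv κ η
  refine ⟨fun x y => (ProbabilityTheory.Kernel.rnDeriv κ η x y * g y).toReal,
    ?_, fun x y => ENNReal.toReal_nonneg, ?_⟩
  · exact (hf0.mul (hgmeas.comp measurable_snd)).ennreal_toReal
  intro x A hA
  have hpxν : p x ≪ ν := (hac x).trans hvν
  have h1 : p x A = ∫⁻ y in A, (p x).rnDeriv ν y ∂ν :=
    by haveI := hp x; haveI : (p x).HaveLebesgueDecomposition ν := @Measure.haveLebesgueDecomposition_of_sigmaFinite E _ (p x) ν inferInstance inferInstance; exact (Measure.setLIntegral_rnDeriv hpxν A).symm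
  have h2 : ∫⁻ y in A, (p x).rnDeriv ν y ∂ν
      = ∫⁻ y in A, ProbabilityTheory.Kernel.rnDeriv κ η x y ∂ν := by
    refine lintegral_congr_ae (Filter.EventuallyEq.restrict ?_)
    have := (ProbabilityTheory.Kernel.rnDeriv_eq_rnDeriv_measure
      (κ := κ) (η := η) (a := x)).symm
    simpa [hη, hκ, ProbabilityTheory.Kernel.const_apply] using this
  have hνd : ν = volume.withDensity g := (Measure.withDensity_rnDeriv_eq ν volume hνv).symm
  have h3 : ∫⁻ y in A, ProbabilityTheory.Kernel.rnDeriv κ η x y ∂ν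
      = ∫⁻ y in A, ProbabilityTheory.Kernel.rnDeriv κ η x y * g y := by
    have hm : Measurable (fun y => ProbabilityTheory.Kernel.rnDeriv κ η x y) :=
      hf0.comp measurable_prodMk_left
    rw [hνd, restrict_withDensity hA,
      lintegral_withDensity_eq_lintegral_mul _ hgmeas hm]
    simp [mul_comm]
    rfl
  have h4 : ∫⁻ y in A, ProbabilityTheory.Kernel.rnDeriv κ η x y * g y
      = ∫⁻ y in A, ENNReal.ofReal ((ProbabilityTheory.Kernel.rnDeriv κ η x y * g y).toReal) := by
    refine lintegral_congr_ae (Filter.EventuallyEq.restrict ?_)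
    have hgae : ∀ᵐ y, g y ≠ ∞ := Measure.rnDeriv_ne_top ν volume
    have hfae : ∀ᵐ y ∂ν, ProbabilityTheory.Kernel.rnDeriv κ η x y ≠ ∞ := by
      simpa [hη, ProbabilityTheory.Kernel.const_apply] using
        (ProbabilityTheory.Kernel.rnDeriv_ne_top κ η (a := x))
    filter_upwards [hgae, hvν.ae_le hfae] with y hy hfy
    rw [ENNReal.ofReal_toReal]
    exact ENNReal.mul_ne_top hfy hy
  rw [h1, h2, h3, h4]
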